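/- Let f be the generic monic polynomial of degree n ≥ 3 over ℚ[a_0, …, a_{n-1}], let g_1(x, y) = f_1(x−y, x+y) and g_3(x, y) = f_3(x−y, x+y) (equivalently, 2y·g_1(x, y) = f(x+y) − f(x−y) and 2y^2·g_3(x, y) = f(x+y) + f(x−y) − 2f(x)). Then the resultant of g_1 and g_3 with respect to y equals H^2: Res_y(g_1, g_3) = H^2, an identity of polynomials in x with coefficients in ℚ[a_0, …, a_{n-1}]. -/

import Mathlib

/-- The resultant of two univariate polynomials `p, q` over a commutative ring,
defined as the determinant of the Sylvester matrix of `p` and `q` built from their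
(actual) degrees: it has `q.natDegree` shifted rows of coefficients of `p` followed by
`p.natDegree` shifted rows of coefficients of `q`. -/
noncomputable def sylResultant {R : Type} [CommRing R] (p q : Polynomial R) : R :=
  Matrix.det (Matrix.of fun i j : Fin (p.natDegree + q.natDegree) =>
    if (i : ℕ) < q.natDegree then
      (if (i : ℕ) ≤ (j : ℕ) ∧ (j : ℕ) ≤ (i : ℕ) + p.natDegree
        then p.coeff ((i : ℕ) + p.natDegree - (j : ℕ)) else 0)
    else
      (if (i : ℕ) - q.natDegree ≤ (j : ℕ) ∧ (j : ℕ) ≤ ((i : ℕ) - q.natDegree) + q.natDegree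
        then q.coeff (((i : ℕ) - q.natDegree) + q.natDegree - (j : ℕ)) else 0))

/-- The determinant polynomial `H` associated with `f` of degree `n`: the determinant of
the `(n-2) × (n-2)` matrix whose entry in (1-indexed) row `p`, column `q` is
`f⁽²ᑫ⁻ᵖ⁺¹⁾/(2q-p+1)!` (a Hasse derivative of `f`) when `2q - p + 1 ≥ 1`, and `0`
when `2q - p + 1 ≤ 0`. (Below `p q : Fin (n-2)` are 0-indexed, so the derivative
order is `2q - p + 2`.) -/
noncomputable def Hdet {R : Type} [CommRing R] (n : ℕ) (f : Polynomial R) : Polynomial R :=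
  Matrix.det (Matrix.of fun p q : Fin (n - 2) =>
    if (p : ℕ) ≤ 2 * (q : ℕ) + 1 then Polynomial.hasseDeriv (2 * (q : ℕ) + 2 - (p : ℕ)) f
    else 0)

section AuxPoly
open Polynomial

theorem coeff_comp_neg_X {S : Type*} [CommRing S] (p : S[X]) (j : ℕ) :
    (p.comp (-X)).coeff j = (-1) ^ j * p.coeff j := by
  induction p using Polynomial.induction_on' with
  | add p q hp hq => simp only [add_comp, coeff_add, hp, hq]; ring
  | monomial i a =>
    rw [monomial_comp]
    rw [show ((-X : S[X]) ^ i) = (-1) ^ i * X ^ i by rw [neg_pow]]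
    simp only [coeff_monomial]
    rw [show (C a * ((-1 : S[X]) ^ i * X ^ i)) = C ((-1 : S)^i * a) * X ^ i by
      rw [map_mul, map_pow, map_neg, map_one]; ring]
    rw [Polynomial.coeff_C_mul, Polynomial.coeff_X_pow]
    by_cases h : j = i
    · subst h; simp
    · simp [h, Ne.symm h]

theorem hasseDeriv_map' {S T : Type*} [CommRing S] [CommRing T] (φ : S →+* T) (f : S[X])
    (j : ℕ) : Polynomial.hasseDeriv j (f.map φ) = (Polynomial.hasseDeriv j f).map φ := by
  ext k
  simp [Polynomial.hasseDeriv_coeff, Polynomial.coeff_map]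

theorem A_coeff {S : Type*} [CommRing S] (f : S[X]) (j : ℕ) :
    (Polynomial.eval₂ (Polynomial.C.comp Polynomial.C) (Polynomial.C Polynomial.X + Polynomial.X)
      f).coeff j = Polynomial.hasseDeriv j f := by
  have h1 : Polynomial.eval₂ (Polynomial.C.comp Polynomial.C)
      (Polynomial.C Polynomial.X + Polynomial.X) f
      = Polynomial.taylor (Polynomial.X : S[X]) (f.map Polynomial.C) := by
    rw [Polynomial.taylor_apply, Polynomial.comp, Polynomial.eval₂_map, add_comm]
  rw [h1, Polynomial.taylor_coeff, hasseDeriv_map', Polynomial.eval_map, Polynomial.eval₂_C_X]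

theorem B_eq {S : Type*} [CommRing S] (f : S[X]) :
    Polynomial.eval₂ (Polynomial.C.comp Polynomial.C) (Polynomial.C Polynomial.X - Polynomial.X) f
    = (Polynomial.eval₂ (Polynomial.C.comp Polynomial.C)
        (Polynomial.C Polynomial.X + Polynomial.X) f).comp (-Polynomial.X) := by
  have hA : Polynomial.eval₂ (Polynomial.C.comp Polynomial.C)
      (Polynomial.C Polynomial.X + Polynomial.X) f
      = (f.map Polynomial.C).comp (Polynomial.X + Polynomial.C Polynomial.X) := by
    rw [Polynomial.comp, Polynomial.eval₂_map, add_comm]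
  have hB : Polynomial.eval₂ (Polynomial.C.comp Polynomial.C)
      (Polynomial.C Polynomial.X - Polynomial.X) f
      = (f.map Polynomial.C).comp (Polynomial.C Polynomial.X - Polynomial.X) := by
    rw [Polynomial.comp, Polynomial.eval₂_map]
  rw [hA, hB, Polynomial.comp_assoc]
  congr 1
  simp only [Polynomial.add_comp, Polynomial.X_comp, Polynomial.C_comp]
  ring

theorem B_coeff {S : Type*} [CommRing S] (f : S[X]) (j : ℕ) :
    (Polynomial.eval₂ (Polynomial.C.comp Polynomial.C) (Polynomial.C Polynomial.X - Polynomial.X)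
      f).coeff j = (-1) ^ j * Polynomial.hasseDeriv j f := by
  rw [B_eq, coeff_comp_neg_X, A_coeff]


end AuxPoly

theorem sylResultant_congr {R : Type} [CommRing R] (p q : Polynomial R) (d e : ℕ)
    (hd : p.natDegree = d) (he : q.natDegree = e) :
    sylResultant p q = Matrix.det (Matrix.of fun i j : Fin (d + e) =>
      if (i : ℕ) < e then
        (if (i : ℕ) ≤ (j : ℕ) ∧ (j : ℕ) ≤ (i : ℕ) + d
          then p.coeff ((i : ℕ) + d - (j : ℕ)) else 0)
      else
        (if (i : ℕ) - e ≤ (j : ℕ) ∧ (j : ℕ) ≤ ((i : ℕ) - e) + e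
          then q.coeff (((i : ℕ) - e) + e - (j : ℕ)) else 0)) := by
  subst hd; subst he; rfl

theorem Hdet_congr {R : Type} [CommRing R] (n m : ℕ) (hm : n - 2 = m) (f : Polynomial R) :
    Hdet n f = Matrix.det (Matrix.of fun p q : Fin m =>
      if (p : ℕ) ≤ 2 * (q : ℕ) + 1 then Polynomial.hasseDeriv (2 * (q : ℕ) + 2 - (p : ℕ)) f
      else 0) := by
  subst hm; rfl

def interleave (m : ℕ) : Fin m ⊕ Fin m ≃ Fin (2 * m) where
  toFun := Sum.elim (fun r => ⟨2 * r, by omega⟩) (fun r => ⟨2 * r + 1, by omega⟩)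
  invFun t := if (t : ℕ) % 2 = 0 then .inl ⟨(t : ℕ) / 2, by have := t.isLt; omega⟩
    else .inr ⟨(t : ℕ) / 2, by have := t.isLt; omega⟩
  left_inv := by
    rintro (r | r)
    · simp only [Sum.elim_inl]
      simp only [show (2 * (r : ℕ)) % 2 = 0 by omega, ↓reduceIte]
      exact congrArg _ (Fin.ext (show 2 * (r : ℕ) / 2 = r by omega))
    · simp only [Sum.elim_inr]
      simp only [show ¬ (2 * (r : ℕ) + 1) % 2 = 0 by omega, ↓reduceIte]
      exact congrArg _ (Fin.ext (show (2 * (r : ℕ) + 1) / 2 = r by omega))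
  right_inv := by
    intro t
    simp only []
    by_cases h : (t : ℕ) % 2 = 0
    · rw [if_pos h]
      exact Fin.ext (show 2 * ((t : ℕ) / 2) = t by have := t.isLt; omega)
    · rw [if_neg h]
      exact Fin.ext (show 2 * ((t : ℕ) / 2) + 1 = t by have := t.isLt; omega)


def oddEvenPerm (e1 e3 : ℕ) (h31 : e3 ≤ e1) (h13 : e1 ≤ e3 + 1) :
    Equiv.Perm (Fin (e1 + e3)) where
  toFun r := ⟨if (r : ℕ) < e3 then 2 * (e3 - 1 - (r : ℕ)) + 1
      else 2 * (e1 + e3 - 1 - (r : ℕ)), by have := r.isLt; split <;> omega⟩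
  invFun t := ⟨if (t : ℕ) % 2 = 1 then e3 - 1 - ((t : ℕ) / 2)
      else e1 + e3 - 1 - ((t : ℕ) / 2), by have := t.isLt; split <;> omega⟩
  left_inv r := Fin.ext (by simp only [Fin.val_mk]; have := r.isLt; split_ifs <;> omega)
  right_inv t := Fin.ext (by simp only [Fin.val_mk]; have := t.isLt; split_ifs <;> omega)

theorem oddEvenPerm_val (e1 e3 : ℕ) (h31 : e3 ≤ e1) (h13 : e1 ≤ e3 + 1) (r : Fin (e1 + e3)) :
    ((oddEvenPerm e1 e3 h31 h13 r : Fin (e1 + e3)) : ℕ) =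
      if (r : ℕ) < e3 then 2 * (e3 - 1 - (r : ℕ)) + 1 else 2 * (e1 + e3 - 1 - (r : ℕ)) := rfl

theorem key {R : Type} [CommRing R] (e1 e3 : ℕ) (h31 : e3 ≤ e1) (h13 : e1 ≤ e3 + 1)
    (h c1 c3 : ℕ → R)
    (hvan : ∀ k, e1 + e3 + 2 < k → h k = 0)
    (hc1 : ∀ k, c1 k = if k % 2 = 0 then h (k + 1) else 0)
    (hc3 : ∀ k, c3 k = if k % 2 = 0 then h (k + 2) else 0) :
    Matrix.det (Matrix.of fun i j : Fin (2 * e1 + 2 * e3) =>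
      if (i : ℕ) < 2 * e3 then
        (if (i : ℕ) ≤ (j : ℕ) ∧ (j : ℕ) ≤ (i : ℕ) + 2 * e1
          then c1 ((i : ℕ) + 2 * e1 - (j : ℕ)) else 0)
      else
        (if (i : ℕ) - 2 * e3 ≤ (j : ℕ) ∧ (j : ℕ) ≤ ((i : ℕ) - 2 * e3) + 2 * e3
          then c3 (((i : ℕ) - 2 * e3) + 2 * e3 - (j : ℕ)) else 0)) =
    (Matrix.det (Matrix.of fun p q : Fin (e1 + e3) =>
      if (p : ℕ) ≤ 2 * (q : ℕ) + 1 then h (2 * (q : ℕ) + 2 - (p : ℕ)) else 0)) ^ 2 := by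
  set m := e1 + e3 with hm
  set S : Matrix (Fin (2 * e1 + 2 * e3)) (Fin (2 * e1 + 2 * e3)) R :=
    Matrix.of fun i j =>
      if (i : ℕ) < 2 * e3 then
        (if (i : ℕ) ≤ (j : ℕ) ∧ (j : ℕ) ≤ (i : ℕ) + 2 * e1
          then c1 ((i : ℕ) + 2 * e1 - (j : ℕ)) else 0)
      else
        (if (i : ℕ) - 2 * e3 ≤ (j : ℕ) ∧ (j : ℕ) ≤ ((i : ℕ) - 2 * e3) + 2 * e3
          then c3 (((i : ℕ) - 2 * e3) + 2 * e3 - (j : ℕ)) else 0) with hS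
  set Hm : Matrix (Fin m) (Fin m) R :=
    Matrix.of (fun p q : Fin m =>
      if (p : ℕ) ≤ 2 * (q : ℕ) + 1 then h (2 * (q : ℕ) + 2 - (p : ℕ)) else 0) with hHm
  set M : Matrix (Fin m) (Fin m) R := Matrix.of (fun r s : Fin m =>
    if (r : ℕ) < e3 then
      (if (r : ℕ) ≤ (s : ℕ) ∧ (s : ℕ) ≤ (r : ℕ) + e1
        then h (2 * ((r : ℕ) + e1 - (s : ℕ)) + 1) else 0)
    else
      (if (r : ℕ) - e3 ≤ (s : ℕ) ∧ (s : ℕ) ≤ (r : ℕ)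
        then h (2 * ((r : ℕ) - (s : ℕ)) + 2) else 0)) with hM
  let E : Fin m ⊕ Fin m ≃ Fin (2 * e1 + 2 * e3) :=
    (interleave m).trans (finCongr (by omega))
  have hE1 : ∀ r : Fin m, ((E (Sum.inl r)) : ℕ) = 2 * r := by
    intro r; simp [E, interleave, finCongr]
  have hE2 : ∀ r : Fin m, ((E (Sum.inr r)) : ℕ) = 2 * r + 1 := by
    intro r; simp [E, interleave, finCongr]
  have hblock : S.submatrix E E = Matrix.fromBlocks M 0 0 M := by
    ext rs ss
    cases rs with
    | inl r =>
      cases ss with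
      | inl s =>
        simp only [Matrix.submatrix_apply, Matrix.fromBlocks_apply₁₁, hS, hM,
          Matrix.of_apply, hE1]
        by_cases hr : (r : ℕ) < e3
        · rw [if_pos (by omega), if_pos hr]
          by_cases hs : (r : ℕ) ≤ (s : ℕ) ∧ (s : ℕ) ≤ (r : ℕ) + e1
          · rw [if_pos (by omega), if_pos hs, hc1, if_pos (by omega)]
            congr 1; omega
          · rw [if_neg (by omega), if_neg hs]
        · rw [if_neg (by omega), if_neg hr]
          by_cases hs : (r : ℕ) - e3 ≤ (s : ℕ) ∧ (s : ℕ) ≤ (r : ℕ)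
          · rw [if_pos (by omega), if_pos hs, hc3, if_pos (by omega)]
            congr 1; omega
          · rw [if_neg (by omega), if_neg hs]
      | inr s =>
        simp only [Matrix.submatrix_apply, Matrix.fromBlocks_apply₁₂, hS,
          Matrix.of_apply, hE1, hE2, Matrix.zero_apply]
        split_ifs with h1 h2 h3
        · rw [hc1, if_neg (by omega)]
        · rfl
        · rw [hc3, if_neg (by omega)]
        · rfl
    | inr r =>
      cases ss with
      | inl s =>
        simp only [Matrix.submatrix_apply, Matrix.fromBlocks_apply₂₁, hS,
          Matrix.of_apply, hE1, hE2, Matrix.zero_apply]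
        split_ifs with h1 h2 h3
        · rw [hc1, if_neg (by omega)]
        · rfl
        · rw [hc3, if_neg (by omega)]
        · rfl
      | inr s =>
        simp only [Matrix.submatrix_apply, Matrix.fromBlocks_apply₂₂, hS, hM,
          Matrix.of_apply, hE2]
        by_cases hr : (r : ℕ) < e3
        · rw [if_pos (by omega), if_pos hr]
          by_cases hs : (r : ℕ) ≤ (s : ℕ) ∧ (s : ℕ) ≤ (r : ℕ) + e1
          · rw [if_pos (by omega), if_pos hs, hc1, if_pos (by omega)]
            congr 1; omega
          · rw [if_neg (by omega), if_neg hs]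
        · rw [if_neg (by omega), if_neg hr]
          by_cases hs : (r : ℕ) - e3 ≤ (s : ℕ) ∧ (s : ℕ) ≤ (r : ℕ)
          · rw [if_pos (by omega), if_pos hs, hc3, if_pos (by omega)]
            congr 1; omega
          · rw [if_neg (by omega), if_neg hs]
  have hdetS : S.det = M.det * M.det := by
    rw [← Matrix.det_submatrix_equiv_self E S, hblock,
      Matrix.det_fromBlocks_zero₂₁]
  -- the permutation ρ
  let ρ : Equiv.Perm (Fin m) := oddEvenPerm e1 e3 h31 h13
  have hρ1 : ∀ r : Fin m, (r : ℕ) < e3 → ((ρ r : Fin m) : ℕ) = 2 * (e3 - 1 - (r : ℕ)) + 1 := by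
    intro r hr
    rw [show ((ρ r : Fin m) : ℕ) = _ from oddEvenPerm_val e1 e3 h31 h13 r, if_pos hr]
  have hρ2 : ∀ r : Fin m, ¬ ((r : ℕ) < e3) → ((ρ r : Fin m) : ℕ) = 2 * (m - 1 - (r : ℕ)) := by
    intro r hr
    rw [show ((ρ r : Fin m) : ℕ) = _ from oddEvenPerm_val e1 e3 h31 h13 r, if_neg hr]
  have hMH : M = Hm.submatrix ρ Fin.revPerm := by
    ext r s
    have hrev : ((Fin.revPerm s : Fin m) : ℕ) = m - 1 - (s : ℕ) := by
      simp [Fin.revPerm_apply, Fin.val_rev]; omega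
    simp only [Matrix.submatrix_apply, hM, hHm, Matrix.of_apply, hrev]
    by_cases hr : (r : ℕ) < e3
    · rw [if_pos hr, hρ1 r hr]
      by_cases hs : (r : ℕ) ≤ (s : ℕ) ∧ (s : ℕ) ≤ (r : ℕ) + e1
      · rw [if_pos hs, if_pos (by have := s.isLt; omega)]
        congr 1; have := s.isLt; omega
      · rw [if_neg hs]
        by_cases hs1 : (s : ℕ) ≤ (r : ℕ) + e1
        · rw [if_pos (by have := s.isLt; omega),
            hvan _ (by have := s.isLt; omega)]
        · rw [if_neg (by have := s.isLt; omega)]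
    · rw [if_neg hr, hρ2 r hr]
      by_cases hs : (r : ℕ) - e3 ≤ (s : ℕ) ∧ (s : ℕ) ≤ (r : ℕ)
      · rw [if_pos hs, if_pos (by have := s.isLt; have := r.isLt; omega)]
        congr 1; have := s.isLt; have := r.isLt; omega
      · rw [if_neg hs]
        by_cases hs1 : (s : ℕ) ≤ (r : ℕ)
        · rw [if_pos (by have := s.isLt; have := r.isLt; omega),
            hvan _ (by have := s.isLt; have := r.isLt; omega)]
        · rw [if_neg (by have := s.isLt; have := r.isLt; omega)]
  have hdetM : M.det = ((Equiv.Perm.sign (Fin.revPerm : Equiv.Perm (Fin m)) : ℤ) : R)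
      * (((Equiv.Perm.sign ρ : ℤ) : R) * Hm.det) := by
    rw [hMH]
    rw [show Hm.submatrix ⇑ρ ⇑Fin.revPerm
        = ((Hm.submatrix ⇑ρ id).submatrix id ⇑Fin.revPerm) from rfl]
    rw [Matrix.det_permute', Matrix.det_permute]
  rw [hdetS, hdetM]
  rcases Int.units_eq_one_or (Equiv.Perm.sign ρ) with h1 | h1 <;>
    rcases Int.units_eq_one_or (Equiv.Perm.sign (Fin.revPerm : Equiv.Perm (Fin m))) with h2 | h2 <;>
      rw [h1, h2] <;> push_cast <;> ring

/-- Let `f = xⁿ + a_{n-1} xⁿ⁻¹ + ⋯ + a₀` (`n ≥ 3`) be the generic monic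
polynomial over `ℚ[a₀, …, a_{n-1}]`. Bivariate polynomials in `x, y` are represented as
elements of `Polynomial (Polynomial (MvPolynomial (Fin n) ℚ))`, the outer variable being
`y`; `g₁ = f₁(x-y, x+y)` and `g₃ = f₃(x-y, x+y)` are determined by
`2y·g₁ = f(x+y) - f(x-y)` and `2y²·g₃ = f(x+y) + f(x-y) - 2f(x)`. Then
`Res_y(g₁, g₃) = H²`, an identity of polynomials in `x` over `ℚ[a₀, …, a_{n-1}]`. -/
theorem resultant_g1_g3_eq_Hdet_sq
    (n : ℕ) (hn : 3 ≤ n)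
    (f : Polynomial (MvPolynomial (Fin n) ℚ))
    (hf : f = Polynomial.X ^ n +
      ∑ i : Fin n, Polynomial.C (MvPolynomial.X i) * Polynomial.X ^ (i : ℕ))
    (g1 g3 : Polynomial (Polynomial (MvPolynomial (Fin n) ℚ)))
    (hg1 : 2 * Polynomial.X * g1 =
      Polynomial.eval₂ (Polynomial.C.comp Polynomial.C)
          (Polynomial.C Polynomial.X + Polynomial.X) f
        - Polynomial.eval₂ (Polynomial.C.comp Polynomial.C)
            (Polynomial.C Polynomial.X - Polynomial.X) f)
    (hg3 : 2 * Polynomial.X ^ 2 * g3 =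
      Polynomial.eval₂ (Polynomial.C.comp Polynomial.C)
          (Polynomial.C Polynomial.X + Polynomial.X) f
        + Polynomial.eval₂ (Polynomial.C.comp Polynomial.C)
            (Polynomial.C Polynomial.X - Polynomial.X) f
        - 2 * Polynomial.C f) :
    sylResultant g1 g3 = (Hdet n f) ^ 2 := by
  classical
  have hfc : ∀ k, n < k → f.coeff k = 0 := by
    intro k hk
    simp only [hf, Polynomial.coeff_add, Polynomial.coeff_X_pow,
      Polynomial.finset_sum_coeff, Polynomial.coeff_C_mul]
    rw [if_neg (by omega), Finset.sum_eq_zero, add_zero]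
    intro i _
    rw [if_neg (by have := i.isLt; omega), mul_zero]
  have hfcn : f.coeff n = 1 := by
    simp only [hf, Polynomial.coeff_add, Polynomial.coeff_X_pow,
      Polynomial.finset_sum_coeff, Polynomial.coeff_C_mul]
    rw [if_pos trivial, Finset.sum_eq_zero, add_zero]
    intro i _
    rw [if_neg (by have := i.isLt; omega), mul_zero]
  have hvan : ∀ k, n < k → Polynomial.hasseDeriv k f = 0 := by
    intro k hk
    ext j
    rw [Polynomial.hasseDeriv_coeff, hfc (j + k) (by omega), mul_zero, Polynomial.coeff_zero]
  have hne : ∀ k, k ≤ n → Polynomial.hasseDeriv k f ≠ 0 := by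
    intro k hk h0
    have h1 := congrArg (fun p => Polynomial.coeff p (n - k)) h0
    simp only [Polynomial.hasseDeriv_coeff, Polynomial.coeff_zero] at h1
    rw [show n - k + k = n by omega, hfcn, mul_one] at h1
    exact Nat.cast_ne_zero.mpr (Nat.choose_pos hk).ne' h1
  have h2ne : (2 : Polynomial (MvPolynomial (Fin n) ℚ)) ≠ 0 := two_ne_zero
  have hg1c : ∀ k, g1.coeff k =
      if k % 2 = 0 then Polynomial.hasseDeriv (k + 1) f else 0 := by
    intro k
    have h2 := congrArg (fun p => Polynomial.coeff p (k + 1)) hg1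
    simp only [Polynomial.coeff_sub, A_coeff, B_coeff] at h2
    rw [mul_assoc, show (2 : Polynomial (Polynomial (MvPolynomial (Fin n) ℚ)))
        = Polynomial.C 2 from (map_ofNat _ 2).symm,
      Polynomial.coeff_C_mul, Polynomial.coeff_X_mul] at h2
    by_cases hk : k % 2 = 0
    · rw [if_pos hk]
      refine mul_left_cancel₀ h2ne ?_
      rw [h2, show ((-1 : Polynomial (MvPolynomial (Fin n) ℚ)) ^ (k + 1)) = -1 from
        Odd.neg_one_pow (α := Polynomial (MvPolynomial (Fin n) ℚ)) (Nat.odd_iff.mpr (by omega : (k + 1) % 2 = 1))]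
      ring
    · rw [if_neg hk]
      refine mul_left_cancel₀ h2ne ?_
      rw [h2, show ((-1 : Polynomial (MvPolynomial (Fin n) ℚ)) ^ (k + 1)) = 1 from
        Even.neg_one_pow (α := Polynomial (MvPolynomial (Fin n) ℚ)) (Nat.even_iff.mpr (by omega : (k + 1) % 2 = 0))]
      ring
  have hg3c : ∀ k, g3.coeff k =
      if k % 2 = 0 then Polynomial.hasseDeriv (k + 2) f else 0 := by
    intro k
    have h2 := congrArg (fun p => Polynomial.coeff p (k + 2)) hg3
    simp only [Polynomial.coeff_sub, Polynomial.coeff_add, A_coeff, B_coeff] at h2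
    rw [mul_assoc, show (2 : Polynomial (Polynomial (MvPolynomial (Fin n) ℚ)))
        = Polynomial.C 2 from (map_ofNat _ 2).symm,
      Polynomial.coeff_C_mul, Polynomial.coeff_X_pow_mul] at h2
    rw [← map_mul, Polynomial.coeff_C, if_neg (by omega)] at h2
    by_cases hk : k % 2 = 0
    · rw [if_pos hk]
      refine mul_left_cancel₀ h2ne ?_
      rw [h2, show ((-1 : Polynomial (MvPolynomial (Fin n) ℚ)) ^ (k + 2)) = 1 from
        Even.neg_one_pow (α := Polynomial (MvPolynomial (Fin n) ℚ)) (Nat.even_iff.mpr (by omega : (k + 2) % 2 = 0))]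
      ring
    · rw [if_neg hk]
      refine mul_left_cancel₀ h2ne ?_
      rw [h2, show ((-1 : Polynomial (MvPolynomial (Fin n) ℚ)) ^ (k + 2)) = -1 from
        Odd.neg_one_pow (α := Polynomial (MvPolynomial (Fin n) ℚ)) (Nat.odd_iff.mpr (by omega : (k + 2) % 2 = 1))]
      ring
  set e1 := (n - 1) / 2 with he1
  set e3 := (n - 2) / 2 with he3
  have hd1 : g1.natDegree = 2 * e1 := by
    refine le_antisymm (Polynomial.natDegree_le_iff_coeff_eq_zero.mpr fun N hN => ?_)
      (Polynomial.le_natDegree_of_ne_zero ?_)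
    · rw [hg1c]
      split_ifs with hp
      · exact hvan _ (by omega)
      · rfl
    · rw [hg1c, if_pos (by omega)]
      exact hne (2 * e1 + 1) (by omega)
  have hd3 : g3.natDegree = 2 * e3 := by
    refine le_antisymm (Polynomial.natDegree_le_iff_coeff_eq_zero.mpr fun N hN => ?_)
      (Polynomial.le_natDegree_of_ne_zero ?_)
    · rw [hg3c]
      split_ifs with hp
      · exact hvan _ (by omega)
      · rfl
    · rw [hg3c, if_pos (by omega)]
      exact hne (2 * e3 + 2) (by omega)
  rw [sylResultant_congr g1 g3 (2 * e1) (2 * e3) hd1 hd3,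
    Hdet_congr n (e1 + e3) (by omega) f]
  exact key e1 e3 (by omega) (by omega) (fun k => Polynomial.hasseDeriv k f)
    g1.coeff g3.coeff (fun k hk => hvan k (by omega)) hg1c hg3c
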